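/- Let c > 0 and α ≥ 0. Let f ∈ L²(ℝ) be such that its Fourier transform f̂ vanishes a.e. outside [−c,c], with continuous representative f(x) = (1/2π)∫_{−c}^{c} e^{ixξ} f̂(ξ) dξ. Let ψ : [−1,1] → ℝ be continuous and μ ∈ ℂ satisfy ∫_{−1}^{1} e^{icxy} ψ(y) (1−y²)^α dy = μ ψ(x) for all x ∈ [−1,1]. Then |∫_{−1}^{1} f(x) ψ(x) (1−x²)^α dx| ≤ |μ| · √(c/(2π)) · (∫_{−1}^{1} ψ(t)² dt)^{1/2} · ‖f‖_{L²(ℝ)}. -/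

import Mathlib

open MeasureTheory

section AuxHelpers
open MeasureTheory Set

-- step: continuity of f
theorem aux_fcont (c : ℝ) (F : ℝ → ℂ) (hFm : Measurable F)
    (hF2 : MemLp F 2 (volume : Measure ℝ))
    (f : ℝ → ℂ)
    (hf : ∀ x : ℝ, f x = (1 / (2 * Real.pi)) *
      ∫ ξ in Set.Ioc (-c) c, Complex.exp (Complex.I * (x * ξ : ℝ)) * F ξ) :
    Continuous f := by
  haveI : IsFiniteMeasure (volume.restrict (Set.Ioc (-c) c)) := by
    refine ⟨?_⟩
    rw [Measure.restrict_apply_univ]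
    exact measure_Ioc_lt_top
  have hFi : Integrable F (volume.restrict (Set.Ioc (-c) c)) := by
    rw [← memLp_one_iff_integrable]
    exact (hF2.restrict _).mono_exponent (by norm_num)
  have h1 : Continuous fun x : ℝ =>
      ∫ ξ in Set.Ioc (-c) c, Complex.exp (Complex.I * (x * ξ : ℝ)) * F ξ := by
    apply continuous_of_dominated (bound := fun ξ => ‖F ξ‖)
    · intro x
      exact ((Complex.continuous_exp.comp (by continuity)).aestronglyMeasurable).mul
        hFm.aestronglyMeasurable.restrict
    · intro x
      filter_upwards with ξ
      rw [norm_mul]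
      simp [Complex.norm_exp]
    · exact hFi.norm
    · filter_upwards with ξ
      exact (Complex.continuous_exp.comp (by continuity)).mul continuous_const
  have : f = fun x => (1 / (2 * Real.pi)) *
      ∫ ξ in Set.Ioc (-c) c, Complex.exp (Complex.I * (x * ξ : ℝ)) * F ξ := funext hf
  rw [this]
  exact continuous_const.mul h1

-- MemLp of the lift
theorem aux_liftmem (c : ℝ) (hc : 0 < c) (G : ℝ → ℂ) (hGm : Measurable G)
    (hG2 : MemLp G 2 (volume : Measure ℝ)) :
    haveI : Fact (0 < 2 * c) := ⟨by linarith⟩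
    MemLp (AddCircle.liftIoc (2 * c) (-c) G) 2 (AddCircle.haarAddCircle) := by
  haveI : Fact (0 < 2 * c) := ⟨by linarith⟩
  have hmeas : Measurable (AddCircle.liftIoc (2 * c) (-c) G) := by
    have : AddCircle.liftIoc (2 * c) (-c) G =
        (Set.Ioc (-c) (-c + 2 * c)).restrict G ∘ (AddCircle.measurableEquivIoc (2*c) (-c)) := rfl
    rw [this]
    exact (hGm.comp measurable_subtype_coe).comp
      (AddCircle.measurableEquivIoc (2*c) (-c)).measurable
  refine ⟨hmeas.aestronglyMeasurable, ?_⟩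
  have h1 : eLpNorm (AddCircle.liftIoc (2 * c) (-c) G) 2
      (volume : Measure (AddCircle (2*c))) =
      eLpNorm (AddCircle.liftIoc (2 * c) (-c) G ∘ ((↑) : ℝ → AddCircle (2*c))) 2
        (volume.restrict (Set.Ioc (-c) (-c + 2*c))) := by
    rw [← (AddCircle.measurePreserving_mk (2*c) (-c)).map_eq,
      eLpNorm_map_measure hmeas.aestronglyMeasurable AddCircle.measurable_mk'.aemeasurable]
  have h2 : eLpNorm (AddCircle.liftIoc (2 * c) (-c) G ∘ ((↑) : ℝ → AddCircle (2*c))) 2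
      (volume.restrict (Set.Ioc (-c) (-c + 2*c))) = eLpNorm G 2
      (volume.restrict (Set.Ioc (-c) (-c + 2*c))) := by
    apply eLpNorm_congr_ae
    filter_upwards [ae_restrict_mem measurableSet_Ioc] with x hx
    exact AddCircle.liftIoc_coe_apply hx
  have hne : ENNReal.ofReal (2*c) ≠ 0 := by
    simp [ENNReal.ofReal_eq_zero]; linarith
  have hmeq : (AddCircle.haarAddCircle : Measure (AddCircle (2*c))) =
      (ENNReal.ofReal (2*c))⁻¹ • (volume : Measure (AddCircle (2*c))) := by
    rw [AddCircle.volume_eq_smul_haarAddCircle, ← smul_assoc, smul_eq_mul,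
      ENNReal.inv_mul_cancel hne ENNReal.ofReal_ne_top, one_smul]
  rw [hmeq, eLpNorm_smul_measure_of_ne_top (by norm_num : (2:ENNReal) ≠ ⊤)]
  apply ENNReal.mul_lt_top
  · exact ENNReal.rpow_lt_top_of_nonneg (by norm_num) (by simp [hne, hc])
  · rw [h1, h2]
    exact lt_of_le_of_lt (eLpNorm_mono_measure _ Measure.restrict_le_self) hG2.2

theorem aux_coeffeq (c : ℝ) (hc : 0 < c) (F : ℝ → ℂ)
    (f : ℝ → ℂ)
    (hf : ∀ x : ℝ, f x = (1 / (2 * Real.pi)) *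
      ∫ ξ in Set.Ioc (-c) c, Complex.exp (Complex.I * (x * ξ : ℝ)) * F ξ)
    (s : ℝ) (n : ℤ) :
    haveI : Fact (0 < 2 * c) := ⟨by linarith⟩
    fourierCoeff (AddCircle.liftIoc (2 * c) (-c)
        (fun ξ => Complex.exp (-(Complex.I * (s * ξ))) * F ξ)) n
      = ((Real.pi / c : ℝ) : ℂ) * f (-(s + Real.pi * n / c)) := by
  haveI : Fact (0 < 2 * c) := ⟨by linarith⟩
  set G : ℝ → ℂ := fun ξ => Complex.exp (-(Complex.I * (s * ξ))) * F ξ with hG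
  rw [fourierCoeff_liftIoc_eq, fourierCoeffOn_eq_integral]
  have hend : -c + 2*c = c := by ring
  rw [hend]
  simp only [fourier_coe_apply]
  have hTT : c - -c = 2*c := by ring
  rw [hTT]
  have hc' : (c : ℂ) ≠ 0 := Complex.ofReal_ne_zero.mpr hc.ne'
  have key : ∀ x : ℝ, Complex.exp (2 * (Real.pi : ℂ) * Complex.I * ((-n : ℤ) : ℂ) * (x : ℂ)
        / ((2 * c : ℝ) : ℂ)) • G x
      = Complex.exp (Complex.I * ((-(s + Real.pi * n / c)) * x : ℝ)) * F x := by
    intro x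
    rw [hG, smul_eq_mul, ← mul_assoc, ← Complex.exp_add]
    congr 2
    push_cast
    field_simp
    ring
  simp only [key]
  rw [intervalIntegral.integral_of_le (by linarith : -c ≤ c)]
  rw [hf (-(s + Real.pi * n / c))]
  have hπ : (Real.pi : ℂ) ≠ 0 := Complex.ofReal_ne_zero.mpr Real.pi_ne_zero
  rw [Complex.real_smul]
  push_cast
  field_simp

theorem shift_hasSum (c : ℝ) (hc : 0 < c) (F : ℝ → ℂ) (hFm : Measurable F)
    (hF2 : MemLp F 2 (volume : Measure ℝ))
    (f : ℝ → ℂ)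
    (hf : ∀ x : ℝ, f x = (1 / (2 * Real.pi)) *
      ∫ ξ in Set.Ioc (-c) c, Complex.exp (Complex.I * (x * ξ : ℝ)) * F ξ)
    (s : ℝ) :
    HasSum (fun n : ℤ => ‖f (s + Real.pi / c * (n : ℝ))‖ ^ 2)
      ((c / (2 * Real.pi ^ 2)) * ∫ ξ in Set.Ioc (-c) c, ‖F ξ‖ ^ 2) := by
  haveI : Fact (0 < 2 * c) := ⟨by linarith⟩
  set G : ℝ → ℂ := fun ξ => Complex.exp (-(Complex.I * (((-s : ℝ) : ℂ) * ξ))) * F ξ with hGdef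
  have hGm : Measurable G := by
    apply Measurable.mul ?_ hFm
    exact (Complex.continuous_exp.comp (by continuity)).measurable
  have hG2 : MemLp G 2 (volume : Measure ℝ) := by
    refine hF2.of_le (hGm.aestronglyMeasurable) ?_
    filter_upwards with ξ
    rw [hGdef]
    simp [Complex.norm_exp]
  set gL := AddCircle.liftIoc (2 * c) (-c) G with hgL
  have hmem : MemLp gL 2 (AddCircle.haarAddCircle) := aux_liftmem c hc G hGm hG2
  set fL := hmem.toLp gL with hfL
  have hae : (fL : AddCircle (2*c) → ℂ) =ᵐ[AddCircle.haarAddCircle] gL := hmem.coeFn_toLp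
  have hcoeff : ∀ n : ℤ, fourierCoeff (fL : AddCircle (2*c) → ℂ) n = fourierCoeff gL n := by
    intro n
    apply integral_congr_ae
    filter_upwards [hae] with t ht
    rw [ht]
  -- Parseval
  have hpars := tsum_sq_fourierCoeff fL
  -- RHS value
  have hne : ENNReal.ofReal (2*c) ≠ 0 := by
    simp only [ne_eq, ENNReal.ofReal_eq_zero, not_le]; linarith
  have hrhs : ∫ t : AddCircle (2*c), ‖fL t‖ ^ 2 ∂AddCircle.haarAddCircle
      = (1 / (2*c)) * ∫ ξ in Set.Ioc (-c) c, ‖F ξ‖ ^ 2 := by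
    have e1 : ∫ t : AddCircle (2*c), ‖fL t‖ ^ 2 ∂AddCircle.haarAddCircle
        = ∫ t : AddCircle (2*c), ‖gL t‖ ^ 2 ∂AddCircle.haarAddCircle := by
      apply integral_congr_ae
      filter_upwards [hae] with t ht
      rw [ht]
    have e2 : ∫ t : AddCircle (2*c), ‖gL t‖ ^ 2
        = (2*c) * ∫ t : AddCircle (2*c), ‖gL t‖ ^ 2 ∂AddCircle.haarAddCircle := by
      rw [AddCircle.volume_eq_smul_haarAddCircle, integral_smul_measure,
        ENNReal.toReal_ofReal (by linarith)]
      simp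
    have e3 : ∫ t : AddCircle (2*c), ‖gL t‖ ^ 2
        = ∫ x in Set.Ioc (-c) (-c + 2*c), ‖gL (x : AddCircle (2*c))‖ ^ 2 :=
      (AddCircle.integral_preimage (2*c) (-c) _).symm
    have e4 : ∫ x in Set.Ioc (-c) (-c + 2*c), ‖gL (x : AddCircle (2*c))‖ ^ 2
        = ∫ ξ in Set.Ioc (-c) c, ‖F ξ‖ ^ 2 := by
      rw [show -c + 2*c = c by ring]
      apply setIntegral_congr_fun measurableSet_Ioc
      intro x hx
      have hx' : x ∈ Set.Ioc (-c) (-c + 2*c) := by rw [show -c + 2*c = c by ring]; exact hx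
      dsimp only
      rw [hgL, AddCircle.liftIoc_coe_apply hx', hGdef]
      simp [Complex.norm_exp]
    rw [e1, ← e4, ← e3, e2]
    have h2c : (2*c) ≠ 0 := by linarith
    field_simp
  -- summability
  have hsummable : Summable (fun n : ℤ => ‖fourierCoeff (fL : AddCircle (2*c) → ℂ) n‖ ^ 2) := by
    have h1 := lp.memℓp (fourierBasis.repr fL)
    rw [memℓp_gen_iff (by norm_num)] at h1
    have h2 : Summable fun i : ℤ => ‖fourierBasis.repr fL i‖ ^ ((2:ENNReal).toReal) := h1
    simp only [ENNReal.toReal_ofNat] at h2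
    have h3 : Summable fun i : ℤ => ‖fourierBasis.repr fL i‖ ^ (2:ℕ) := by
      convert h2 using 2 with i
      rw [← Real.rpow_natCast]
      norm_num
    simpa only [fourierBasis_repr] using h3
  have hsum0 : HasSum (fun n : ℤ => ‖fourierCoeff (fL : AddCircle (2*c) → ℂ) n‖ ^ 2)
      ((1 / (2*c)) * ∫ ξ in Set.Ioc (-c) c, ‖F ξ‖ ^ 2) := by
    rw [← hrhs, ← hpars]
    exact hsummable.hasSum
  -- rewrite coefficients
  have hkey : ∀ n : ℤ, ‖fourierCoeff (fL : AddCircle (2*c) → ℂ) n‖ ^ 2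
      = (Real.pi / c)^2 * ‖f (s + Real.pi / c * ((-n : ℤ) : ℝ))‖ ^ 2 := by
    intro n
    have h := aux_coeffeq c hc F f hf (-s) n
    rw [← hGdef, ← hgL] at h
    rw [hcoeff n, h]
    rw [norm_mul, mul_pow, Complex.norm_real, Real.norm_eq_abs, sq_abs]
    congr 3
    push_cast
    ring
  rw [funext hkey] at hsum0
  have hsum1 : HasSum (fun n : ℤ => (Real.pi / c)^2 * ‖f (s + Real.pi / c * (n : ℝ))‖ ^ 2)
      ((1 / (2*c)) * ∫ ξ in Set.Ioc (-c) c, ‖F ξ‖ ^ 2) := by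
    have := (Equiv.neg ℤ).hasSum_iff.mpr hsum0
    convert this using 2 with n
    simp [Function.comp]
  have hsum2 := hsum1.mul_left ((c / Real.pi)^2)
  have hπ := Real.pi_ne_zero
  have hfun : ∀ x : ℝ, (c / Real.pi)^2 * ((Real.pi / c)^2 * x) = x := by
    intro x
    rw [← mul_assoc, show (c / Real.pi)^2 * (Real.pi / c)^2 = 1 by field_simp]
    ring
  have hconst : (c / Real.pi)^2 * ((1 / (2*c)) * ∫ ξ in Set.Ioc (-c) c, ‖F ξ‖ ^ 2)
      = (c / (2 * Real.pi ^ 2)) * ∫ ξ in Set.Ioc (-c) c, ‖F ξ‖ ^ 2 := by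
    field_simp
  simp only [hfun] at hsum2
  rw [hconst] at hsum2
  exact hsum2

theorem plancherel_aux (c : ℝ) (hc : 0 < c) (F : ℝ → ℂ) (hFm : Measurable F)
    (hF2 : MemLp F 2 (volume : Measure ℝ))
    (f : ℝ → ℂ)
    (hf : ∀ x : ℝ, f x = (1 / (2 * Real.pi)) *
      ∫ ξ in Set.Ioc (-c) c, Complex.exp (Complex.I * (x * ξ : ℝ)) * F ξ) :
    ∫ ξ in Set.Ioc (-c) c, ‖F ξ‖ ^ 2 = (2 * Real.pi) * ∫ x : ℝ, ‖f x‖ ^ 2 := by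
  have hπ := Real.pi_pos
  have hfc : Continuous f := aux_fcont c F hFm hF2 f hf
  set δ : ℝ := Real.pi / c with hδdef
  have hδ : 0 < δ := by positivity
  set A : ℝ := ∫ ξ in Set.Ioc (-c) c, ‖F ξ‖ ^ 2 with hA
  have hAnonneg : 0 ≤ A := by
    apply setIntegral_nonneg measurableSet_Ioc
    intro x _
    positivity
  set g : ℝ → ENNReal := fun x => ENNReal.ofReal (‖f x‖ ^ 2) with hg
  have hgm : Measurable g := by
    apply ENNReal.measurable_ofReal.comp
    exact ((hfc.norm).pow 2).measurable
  -- translation identity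
  have htrans : ∀ (u v a : ℝ), ∫⁻ s in Ioc u v, g (s + a) = ∫⁻ x in Ioc (u + a) (v + a), g x := by
    intro u v a
    have h0 : MeasurePreserving (fun s : ℝ => s + a) volume volume :=
      measurePreserving_add_right volume a
    have h : MeasurePreserving (fun s : ℝ => s + a) (volume.restrict (Ioc u v))
        (volume.restrict (Ioc (u + a) (v + a))) := by
      have := h0.restrict_preimage (s := Ioc (u + a) (v + a)) measurableSet_Ioc
      convert this using 2
      ext x
      simp only [mem_Ioc, mem_preimage]
      constructor <;> intro h <;> constructor <;> linarith [h.1, h.2]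
    rw [← h.lintegral_comp hgm]
  -- decompose the lintegral
  have hdecomp : ∫⁻ x, g x = ∑' n : ℤ, ∫⁻ x in Ioc ((0:ℝ) + n • δ) (0 + (n + 1) • δ), g x := by
    rw [← setLIntegral_univ, ← iUnion_Ioc_add_zsmul hδ 0]
    exact lintegral_iUnion (fun n => measurableSet_Ioc)
      (pairwise_disjoint_Ioc_add_zsmul 0 δ) g
  have hstep : ∀ n : ℤ, ∫⁻ x in Ioc ((0:ℝ) + n • δ) (0 + (n + 1) • δ), g x
      = ∫⁻ s in Ioc (0:ℝ) δ, g (s + n • δ) := by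
    intro n
    have hIoc : Ioc ((0:ℝ) + n • δ) (0 + (n+1) • δ) = Ioc ((0:ℝ) + n • δ) (δ + n • δ) := by
      congr 1
      simp only [zero_add, add_zsmul, one_zsmul]
      ring
    rw [hIoc]
    exact (htrans 0 δ (n • δ)).symm
  have hpoint : ∀ s : ℝ, ∑' n : ℤ, g (s + n • δ) = ENNReal.ofReal (c / (2 * Real.pi ^ 2) * A) := by
    intro s
    have hsum := shift_hasSum c hc F hFm hF2 f hf s
    have h1 : ∀ n : ℤ, g (s + n • δ) = ENNReal.ofReal (‖f (s + δ * (n:ℝ))‖ ^ 2) := by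
      intro n
      rw [hg]
      congr 2
      simp [zsmul_eq_mul, mul_comm]
    rw [funext h1]
    rw [← ENNReal.ofReal_tsum_of_nonneg (fun n => by positivity) hsum.summable, hsum.tsum_eq]
  have hswap : ∫⁻ x, g x = ∫⁻ s in Ioc (0:ℝ) δ, ∑' n : ℤ, g (s + n • δ) := by
    rw [hdecomp, tsum_congr hstep, ← lintegral_tsum]
    intro n
    exact (hgm.comp (measurable_add_const _)).aemeasurable
  have hval : ∫⁻ x, g x = ENNReal.ofReal (c / (2 * Real.pi ^ 2) * A) * ENNReal.ofReal δ := by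
    rw [hswap]
    have : ∫⁻ s in Ioc (0:ℝ) δ, ∑' n : ℤ, g (s + n • δ)
        = ∫⁻ _ in Ioc (0:ℝ) δ, ENNReal.ofReal (c / (2 * Real.pi ^ 2) * A) := by
      apply lintegral_congr_ae
      filter_upwards with s
      exact hpoint s
    rw [this, setLIntegral_const, Real.volume_Ioc, sub_zero]
  have hconstnn : 0 ≤ c / (2 * Real.pi ^ 2) * A :=
    mul_nonneg (by positivity) hAnonneg
  have hint : ∫ x : ℝ, ‖f x‖ ^ 2 = (c / (2 * Real.pi ^ 2) * A) * δ := by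
    rw [integral_eq_lintegral_of_nonneg_ae (f := fun x => ‖f x‖ ^ 2) (Filter.Eventually.of_forall fun x => by positivity)
      ((hfc.norm.pow 2).aestronglyMeasurable)]
    rw [show (∫⁻ x, ENNReal.ofReal (‖f x‖^2)) = ∫⁻ x, g x from rfl]
    rw [hval, ENNReal.toReal_mul, ENNReal.toReal_ofReal hconstnn, ENNReal.toReal_ofReal hδ.le]
  rw [hint, hδdef]
  have hπ' : Real.pi ≠ 0 := Real.pi_ne_zero
  have hc' : c ≠ 0 := hc.ne'
  field_simp

end AuxHelpers

/-- For a band-limited function `f ∈ L²(ℝ)` with Fourier transform `F`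
vanishing a.e. outside `[-c,c]` (and `f` given by its continuous representative
`f(x) = (1/2π)∫_{-c}^{c} e^{ixξ} F(ξ) dξ`), and an eigenfunction `ψ` of the finite weighted
Fourier transform with eigenvalue `μ`, one has
`|∫_{-1}^{1} f(x)ψ(x)(1-x²)^α dx| ≤ |μ| √(c/2π) (∫_{-1}^{1} ψ²)^{1/2} ‖f‖_{L²(ℝ)}`. -/
theorem inner_product_bound_bandlimited
    (c α : ℝ) (hc : 0 < c) (hα : 0 ≤ α)
    (f F : ℝ → ℂ)
    (hF2 : MemLp F 2 (volume : Measure ℝ))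
    (hsupp : ∀ᵐ ξ : ℝ, c < |ξ| → F ξ = 0)
    (hf : ∀ x : ℝ, f x = (1 / (2 * Real.pi)) *
      ∫ ξ in (-c)..c, Complex.exp (Complex.I * (x * ξ : ℝ)) * F ξ)
    (hfL2 : MemLp f 2 (volume : Measure ℝ))
    (ψ : ℝ → ℝ) (hψ : ContinuousOn ψ (Set.Icc (-1) 1))
    (μ : ℂ)
    (heig : ∀ x ∈ Set.Icc (-1 : ℝ) 1,
      ∫ y in (-1 : ℝ)..1,
          Complex.exp (Complex.I * (c * x * y : ℝ)) * (ψ y : ℂ) * (((1 - y ^ 2) ^ α : ℝ) : ℂ)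
        = μ * (ψ x : ℂ)) :
    ‖∫ x in (-1 : ℝ)..1, f x * (ψ x : ℂ) * (((1 - x ^ 2) ^ α : ℝ) : ℂ)‖
      ≤ ‖μ‖ * Real.sqrt (c / (2 * Real.pi)) *
          Real.sqrt (∫ t in (-1 : ℝ)..1, (ψ t) ^ 2) *
          Real.sqrt (∫ x : ℝ, ‖f x‖ ^ 2) := by
  have hπ := Real.pi_pos
  have h2π : (0:ℝ) < 2 * Real.pi := by linarith
  -- measurable representative of F
  set F' : ℝ → ℂ := hF2.1.mk F with hF'def
  have hF'm : StronglyMeasurable F' := hF2.1.stronglyMeasurable_mk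
  have hFF' : F =ᵐ[volume] F' := hF2.1.ae_eq_mk
  have hF'2 : MemLp F' 2 (volume : Measure ℝ) := hF2.ae_eq hFF'
  have hf' : ∀ x : ℝ, f x = (1 / (2 * Real.pi)) *
      ∫ ξ in Set.Ioc (-c) c, Complex.exp (Complex.I * (x * ξ : ℝ)) * F' ξ := by
    intro x
    rw [hf x, intervalIntegral.integral_of_le (by linarith : -c ≤ c)]
    congr 1
    apply integral_congr_ae
    filter_upwards [ae_restrict_of_ae hFF'] with ξ h
    rw [h]
  -- the weight
  set ω : ℝ → ℝ := fun y => (1 - y^2) ^ α with hωdef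
  have hωcont : Continuous ω := by
    rw [continuous_iff_continuousAt]
    intro x
    exact (Real.continuousAt_rpow_const _ _ (Or.inr hα)).comp
      (by fun_prop : ContinuousAt (fun y : ℝ => 1 - y^2) x)
  -- eigen relation in set-integral form
  have heig' : ∀ ξ ∈ Set.Ioc (-c) c,
      (∫ x in Set.Ioc (-1:ℝ) 1,
        Complex.exp (Complex.I * (x * ξ : ℝ)) * (ψ x : ℂ) * ((ω x : ℝ) : ℂ))
        = μ * (ψ (ξ/c) : ℂ) := by
    intro ξ hξ
    have hmem : ξ/c ∈ Set.Icc (-1:ℝ) 1 := by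
      constructor
      · rw [le_div_iff₀ hc]; linarith [hξ.1]
      · rw [div_le_one hc]; exact hξ.2
    have h := heig (ξ/c) hmem
    rw [intervalIntegral.integral_of_le (by norm_num : (-1:ℝ) ≤ 1)] at h
    rw [← h]
    apply setIntegral_congr_fun measurableSet_Ioc
    intro y _
    have hcc : c * (ξ / c) * y = y * ξ := by field_simp
    dsimp only
    rw [hcc, hωdef]
  -- finite measure instances
  haveI hfin1 : IsFiniteMeasure (volume.restrict (Set.Ioc (-1:ℝ) 1)) :=
    ⟨by rw [Measure.restrict_apply_univ]; exact measure_Ioc_lt_top⟩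
  haveI hfin2 : IsFiniteMeasure (volume.restrict (Set.Ioc (-c) c)) :=
    ⟨by rw [Measure.restrict_apply_univ]; exact measure_Ioc_lt_top⟩
  -- bound for ψ * ω on [-1,1]
  obtain ⟨M, hM⟩ := isCompact_Icc.exists_bound_of_continuousOn
    (hψ.mul (hωcont.continuousOn : ContinuousOn ω (Set.Icc (-1:ℝ) 1)))
  have hψae : AEStronglyMeasurable ψ (volume.restrict (Set.Ioc (-1:ℝ) 1)) :=
    (hψ.mono Set.Ioc_subset_Icc_self).aestronglyMeasurable measurableSet_Ioc
  have hF'int : Integrable F' (volume.restrict (Set.Ioc (-c) c)) := by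
    rw [← memLp_one_iff_integrable]
    exact (hF'2.restrict _).mono_exponent (by norm_num)
  -- Fubini step
  have hkernel : Integrable (Function.uncurry fun x ξ =>
      Complex.exp (Complex.I * (x * ξ : ℝ)) * (ψ x : ℂ) * ((ω x : ℝ) : ℂ) * F' ξ)
      ((volume.restrict (Set.Ioc (-1:ℝ) 1)).prod (volume.restrict (Set.Ioc (-c) c))) := by
    have hbound : Integrable (fun z : ℝ × ℝ => M * ‖F' z.2‖)
        ((volume.restrict (Set.Ioc (-1:ℝ) 1)).prod (volume.restrict (Set.Ioc (-c) c))) :=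
      Integrable.mul_prod (integrable_const _) hF'int.norm
    apply hbound.mono'
    · apply AEStronglyMeasurable.mul
      apply AEStronglyMeasurable.mul
      apply AEStronglyMeasurable.mul
      · exact (Complex.continuous_exp.comp (by fun_prop :
          Continuous fun z : ℝ × ℝ => Complex.I * ((z.1 * z.2 : ℝ) : ℂ))).aestronglyMeasurable
      · exact (Complex.continuous_ofReal.comp_aestronglyMeasurable hψae).comp_fst
      · exact ((Complex.continuous_ofReal.comp hωcont).comp continuous_fst).aestronglyMeasurable
      · exact (hF'm.measurable.comp measurable_snd).aestronglyMeasurable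
    · rw [Measure.prod_restrict]
      apply (ae_restrict_mem (measurableSet_Ioc.prod measurableSet_Ioc)).mono
      intro z hz
      have hz1 : z.1 ∈ Set.Icc (-1:ℝ) 1 := Set.Ioc_subset_Icc_self hz.1
      have hMz := hM z.1 hz1
      rw [Real.norm_eq_abs] at hMz
      have h1 : ‖Complex.exp (Complex.I * ((z.1 * z.2 : ℝ) : ℂ))‖ = 1 := by
        simp [Complex.norm_exp]
      calc ‖Function.uncurry (fun x ξ => Complex.exp (Complex.I * (x * ξ : ℝ)) * (ψ x : ℂ)
              * ((ω x : ℝ) : ℂ) * F' ξ) z‖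
          = ‖Complex.exp (Complex.I * ((z.1 * z.2 : ℝ) : ℂ))‖ * ‖(ψ z.1 : ℂ) * ((ω z.1 : ℝ) : ℂ)‖
            * ‖F' z.2‖ := by
            rw [Function.uncurry]
            simp only [norm_mul]
            ring
        _ = |ψ z.1 * ω z.1| * ‖F' z.2‖ := by
            rw [h1, one_mul, ← Complex.ofReal_mul, Complex.norm_real, Real.norm_eq_abs]
        _ ≤ M * ‖F' z.2‖ := by
            apply mul_le_mul_of_nonneg_right hMz (norm_nonneg _)
  -- the key identity
  have key : (∫ x in Set.Ioc (-1:ℝ) 1, f x * (ψ x : ℂ) * ((ω x : ℝ) : ℂ))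
      = (((1 / (2 * Real.pi) : ℝ)) : ℂ) *
        (μ * ∫ ξ in Set.Ioc (-c) c, (ψ (ξ/c) : ℂ) * F' ξ) := by
    have e1 : ∀ x : ℝ, f x * (ψ x : ℂ) * ((ω x : ℝ) : ℂ)
        = (((1 / (2 * Real.pi) : ℝ)) : ℂ) * ∫ ξ in Set.Ioc (-c) c,
            Complex.exp (Complex.I * (x * ξ : ℝ)) * (ψ x : ℂ) * ((ω x : ℝ) : ℂ) * F' ξ := by
      intro x
      have e2 : ∫ ξ in Set.Ioc (-c) c,
          Complex.exp (Complex.I * (x * ξ : ℝ)) * (ψ x : ℂ) * ((ω x : ℝ) : ℂ) * F' ξ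
          = (∫ ξ in Set.Ioc (-c) c, Complex.exp (Complex.I * (x * ξ : ℝ)) * F' ξ)
            * ((ψ x : ℂ) * ((ω x : ℝ) : ℂ)) := by
        rw [← integral_mul_const]
        apply integral_congr_ae
        filter_upwards with ξ
        ring
      rw [e2, hf' x]
      push_cast
      ring
    rw [integral_congr_ae (Filter.Eventually.of_forall e1), integral_const_mul]
    congr 1
    rw [integral_integral_swap hkernel]
    rw [← integral_const_mul]
    apply integral_congr_ae
    filter_upwards [ae_restrict_mem measurableSet_Ioc] with ξ hξ
    have e3 : ∫ x in Set.Ioc (-1:ℝ) 1, Complex.exp (Complex.I * (x * ξ : ℝ)) * (ψ x : ℂ)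
        * ((ω x : ℝ) : ℂ) * F' ξ
        = (∫ x in Set.Ioc (-1:ℝ) 1, Complex.exp (Complex.I * (x * ξ : ℝ)) * (ψ x : ℂ)
          * ((ω x : ℝ) : ℂ)) * F' ξ := integral_mul_const _ _
    rw [e3, heig' ξ hξ]
    ring
  
  -- abbreviations
  set J : ℂ := ∫ ξ in Set.Ioc (-c) c, (ψ (ξ/c) : ℂ) * F' ξ with hJdef
  set A : ℝ := ∫ ξ in Set.Ioc (-c) c, ‖F' ξ‖^2 with hAdef
  set B : ℝ := ∫ t in Set.Ioc (-1:ℝ) 1, ψ t^2 with hBdef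
  set X : ℝ := ∫ x : ℝ, ‖f x‖^2 with hXdef
  have hBnn : 0 ≤ B := setIntegral_nonneg measurableSet_Ioc (fun t _ => sq_nonneg _)
  have hXnn : 0 ≤ X := integral_nonneg (fun x => by positivity)
  have hPlanch : A = (2 * Real.pi) * X := plancherel_aux c hc F' hF'm.measurable hF'2 f hf'
  -- substitution
  have hsub : (∫ ξ in Set.Ioc (-c) c, (ψ (ξ/c))^2) = c * B := by
    have h1 := intervalIntegral.integral_comp_div (a := -c) (b := c) (fun t => ψ t ^ 2) hc.ne'
    simp only [neg_div, div_self hc.ne'] at h1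
    rw [intervalIntegral.integral_of_le (by linarith : -c ≤ c),
      intervalIntegral.integral_of_le (by norm_num : (-1:ℝ) ≤ 1)] at h1
    rw [h1, smul_eq_mul, hBdef]
  -- Cauchy-Schwarz
  obtain ⟨Mψ, hMψ⟩ := isCompact_Icc.exists_bound_of_continuousOn hψ
  have hψc_cont : ContinuousOn (fun ξ => ψ (ξ/c)) (Set.Icc (-c) c) := by
    apply hψ.comp ((continuous_id.div_const c).continuousOn)
    intro x hx
    simp only [id_eq]
    constructor
    · rw [le_div_iff₀ hc]; linarith [hx.1]
    · rw [div_le_one hc]; exact hx.2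
  have hψc_ae : AEStronglyMeasurable (fun ξ => ψ (ξ/c)) (volume.restrict (Set.Ioc (-c) c)) :=
    (hψc_cont.mono Set.Ioc_subset_Icc_self).aestronglyMeasurable measurableSet_Ioc
  have h22 : Real.HolderConjugate 2 2 := ⟨by norm_num, by norm_num, by norm_num⟩
  have hof2 : ENNReal.ofReal (2:ℝ) = 2 := by norm_num
  have hmem1 : MemLp (fun ξ => |ψ (ξ/c)|) (ENNReal.ofReal (2:ℝ))
      (volume.restrict (Set.Ioc (-c) c)) := by
    have habs : (fun ξ => |ψ (ξ/c)|) = fun ξ => ‖ψ (ξ/c)‖ := by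
      funext ξ
      rw [Real.norm_eq_abs]
    rw [habs]
    apply MemLp.of_bound hψc_ae.norm Mψ
    apply (ae_restrict_mem measurableSet_Ioc).mono
    intro ξ hξ
    have : ξ/c ∈ Set.Icc (-1:ℝ) 1 := by
      constructor
      · rw [le_div_iff₀ hc]; linarith [hξ.1]
      · rw [div_le_one hc]; exact hξ.2
    simpa [Real.norm_eq_abs, abs_abs] using hMψ (ξ/c) this
  have hmem2 : MemLp (fun ξ => ‖F' ξ‖) (ENNReal.ofReal (2:ℝ))
      (volume.restrict (Set.Ioc (-c) c)) := by
    rw [hof2]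
    exact (hF'2.restrict _).norm
  have hCS : ‖J‖ ≤ Real.sqrt (c * B) * Real.sqrt A := by
    have step1 : ‖J‖ ≤ ∫ ξ in Set.Ioc (-c) c, |ψ (ξ/c)| * ‖F' ξ‖ := by
      refine le_trans (norm_integral_le_integral_norm _) (le_of_eq ?_)
      apply integral_congr_ae
      filter_upwards with ξ
      rw [norm_mul, Complex.norm_real, Real.norm_eq_abs]
    have step2 := integral_mul_le_Lp_mul_Lq_of_nonneg h22
      (Filter.Eventually.of_forall (fun ξ => abs_nonneg (ψ (ξ/c))))
      (Filter.Eventually.of_forall (fun ξ => norm_nonneg (F' ξ)))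
      hmem1 hmem2
    have e1 : (∫ ξ in Set.Ioc (-c) c, |ψ (ξ/c)| ^ (2:ℝ)) = c * B := by
      rw [← hsub]
      apply integral_congr_ae
      filter_upwards with ξ
      rw [Real.rpow_two, sq_abs]
    have e2 : (∫ ξ in Set.Ioc (-c) c, ‖F' ξ‖ ^ (2:ℝ)) = A := by
      rw [hAdef]
      apply integral_congr_ae
      filter_upwards with ξ
      rw [Real.rpow_two]
    rw [e1, e2] at step2
    calc ‖J‖ ≤ ∫ ξ in Set.Ioc (-c) c, |ψ (ξ/c)| * ‖F' ξ‖ := step1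
      _ ≤ (c * B) ^ ((1:ℝ)/2) * A ^ ((1:ℝ)/2) := step2
      _ = Real.sqrt (c * B) * Real.sqrt A := by
          rw [Real.sqrt_eq_rpow, Real.sqrt_eq_rpow]
  -- final assembly
  rw [intervalIntegral.integral_of_le (by norm_num : (-1:ℝ) ≤ 1),
    intervalIntegral.integral_of_le (by norm_num : (-1:ℝ) ≤ 1)]
  rw [key]
  rw [norm_mul, norm_mul, Complex.norm_real, Real.norm_eq_abs, abs_of_pos (by positivity)]
  have hJ2 : ‖J‖ ≤ Real.sqrt (c * B) * Real.sqrt ((2 * Real.pi) * X) := by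
    rw [← hPlanch]; exact hCS
  have h2πs := Real.mul_self_sqrt h2π.le
  have hsne : Real.sqrt (2 * Real.pi) ≠ 0 := by positivity
  calc 1 / (2*Real.pi) * (‖μ‖ * ‖J‖)
      ≤ 1 / (2*Real.pi) * (‖μ‖ * (Real.sqrt (c * B) * Real.sqrt ((2 * Real.pi) * X))) := by
        gcongr
    _ = ‖μ‖ * Real.sqrt (c / (2 * Real.pi)) * Real.sqrt B * Real.sqrt X := by
        rw [Real.sqrt_mul hc.le, Real.sqrt_mul h2π.le, Real.sqrt_div hc.le]
        have hkey2 : 1/(2*Real.pi) * Real.sqrt (2*Real.pi) = 1/Real.sqrt (2*Real.pi) := by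
          rw [eq_div_iff hsne, mul_assoc, h2πs]
          field_simp
        calc 1/(2*Real.pi) * (‖μ‖ * (Real.sqrt c * Real.sqrt B
              * (Real.sqrt (2*Real.pi) * Real.sqrt X)))
            = (1/(2*Real.pi) * Real.sqrt (2*Real.pi)) * (‖μ‖ * Real.sqrt c * Real.sqrt B
              * Real.sqrt X) := by ring
          _ = (1/Real.sqrt (2*Real.pi)) * (‖μ‖ * Real.sqrt c * Real.sqrt B * Real.sqrt X) := by
              rw [hkey2]
          _ = ‖μ‖ * (Real.sqrt c / Real.sqrt (2*Real.pi)) * Real.sqrt B * Real.sqrt X := by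
              ring
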